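/- For positive definite n×n matrices A and B, the geometric mean A ♯ B is the unique positive definite solution X of the Riccati equation X A⁻¹ X = B. -/

import Mathlib

open Matrix
open scoped ComplexOrder

/-- The positive square root of a positive semidefinite matrix, realized via the
continuous functional calculus for Hermitian matrices. -/
noncomputable def msqrt {n : Type*} [Fintype n] [DecidableEq n]
    (A : Matrix n n ℂ) : Matrix n n ℂ := cfc Real.sqrt A

/-- The matrix geometric mean `A ♯ B = A^{1/2} (A^{-1/2} B A^{-1/2})^{1/2} A^{1/2}`. -/
noncomputable def geom {n : Type*} [Fintype n] [DecidableEq n]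
    (A B : Matrix n n ℂ) : Matrix n n ℂ :=
  msqrt A * msqrt ((msqrt A)⁻¹ * B * (msqrt A)⁻¹) * msqrt A

namespace Matrix.PosSemidef

open scoped MatrixOrder

noncomputable def sqrt {n : Type*} [Fintype n] [DecidableEq n]
    {A : Matrix n n ℂ} (_h : A.PosSemidef) : Matrix n n ℂ := CFC.sqrt A

lemma sqrt_mul_self {n : Type*} [Fintype n] [DecidableEq n]
    {A : Matrix n n ℂ} (h : A.PosSemidef) : h.sqrt * h.sqrt = A :=
  CFC.sqrt_mul_sqrt_self A h.nonneg

lemma posSemidef_sqrt {n : Type*} [Fintype n] [DecidableEq n]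
    {A : Matrix n n ℂ} (h : A.PosSemidef) : h.sqrt.PosSemidef :=
  (CFC.sqrt_nonneg A).posSemidef

lemma eq_sqrt_of_sq_eq {n : Type*} [Fintype n] [DecidableEq n]
    {A B : Matrix n n ℂ} (hA : A.PosSemidef) (hB : B.PosSemidef) (h : A ^ 2 = B) :
    A = hB.sqrt :=
  ((CFC.sqrt_eq_iff B A hB.nonneg hA.nonneg).2 (by rw [← sq]; exact h)).symm

end Matrix.PosSemidef

lemma msqrt_eq {n : Type*} [Fintype n] [DecidableEq n]
    {A : Matrix n n ℂ} (hA : A.PosSemidef) : msqrt A = hA.sqrt := by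
  open scoped MatrixOrder in
  rw [msqrt, Matrix.PosSemidef.sqrt, CFC.sqrt_eq_real_sqrt A hA.nonneg, cfcₙ_eq_cfc]

lemma posDef_conj {n : Type*} [Fintype n] [DecidableEq n]
    {A B : Matrix n n ℂ} (hA : A.PosDef) (hB : IsUnit B) : (Bᴴ * A * B).PosDef := by
  exact (Matrix.IsUnit.posDef_star_left_conjugate_iff hB).mpr hA

lemma posDef_of_posSemidef_isUnit {n : Type*} [Fintype n] [DecidableEq n]
    {S : Matrix n n ℂ} (h : S.PosSemidef) (hu : IsUnit S) : S.PosDef := by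
  have hT : h.sqrt * h.sqrt = S := h.sqrt_mul_self
  have hTu : IsUnit h.sqrt := by
    rw [Matrix.isUnit_iff_isUnit_det] at hu ⊢
    rw [← hT, Matrix.det_mul] at hu
    exact isUnit_mul_self_iff.mp hu
  have : S = h.sqrt ᴴ * 1 * h.sqrt := by
    rw [mul_one, h.posSemidef_sqrt.1, hT]
  rw [this]
  exact posDef_conj Matrix.PosDef.one hTu

set_option maxHeartbeats 1000000 in
/-- For positive definite `A, B`, the geometric mean `A ♯ B` is the unique positive
definite solution `X` of the Riccati equation `X A⁻¹ X = B`. -/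
theorem geom_unique_riccati_solution {n : Type*} [Fintype n] [DecidableEq n]
    (A B : Matrix n n ℂ) (hA : A.PosDef) (hB : B.PosDef) :
    (geom A B).PosDef ∧ geom A B * A⁻¹ * geom A B = B ∧
      ∀ X : Matrix n n ℂ, X.PosDef → X * A⁻¹ * X = B → X = geom A B := by
  obtain ⟨S, hSdef⟩ : ∃ S, msqrt A = S := ⟨_, rfl⟩
  have hSS : S * S = A := by
    rw [← hSdef, msqrt_eq hA.posSemidef]; exact hA.posSemidef.sqrt_mul_self
  have hSu : IsUnit S := by
    rw [Matrix.isUnit_iff_isUnit_det]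
    have := hA.isUnit
    rw [Matrix.isUnit_iff_isUnit_det, ← hSS, Matrix.det_mul] at this
    exact isUnit_mul_self_iff.mp this
  have hSpd : S.PosDef := by
    refine posDef_of_posSemidef_isUnit ?_ hSu
    rw [← hSdef, msqrt_eq hA.posSemidef]; exact hA.posSemidef.posSemidef_sqrt
  have hSH : Sᴴ = S := hSpd.1
  have hSi : S * S⁻¹ = 1 := Matrix.mul_nonsing_inv S (Matrix.isUnit_iff_isUnit_det S |>.mp hSu)
  have hSi' : S⁻¹ * S = 1 := Matrix.nonsing_inv_mul S (Matrix.isUnit_iff_isUnit_det S |>.mp hSu)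
  have hSiu : IsUnit (S⁻¹) := isUnit_nonsing_inv_iff.mpr hSu
  have hSiH : (S⁻¹)ᴴ = S⁻¹ := hSpd.inv.1
  obtain ⟨M, hMdef⟩ : ∃ M, S⁻¹ * B * S⁻¹ = M := ⟨_, rfl⟩
  have hMpd : M.PosDef := by
    rw [← hMdef]
    nth_rewrite 1 [← hSiH]
    exact posDef_conj hB hSiu
  obtain ⟨T, hTdef⟩ : ∃ T, msqrt M = T := ⟨_, rfl⟩
  have hTT : T * T = M := by
    rw [← hTdef, msqrt_eq hMpd.posSemidef]; exact hMpd.posSemidef.sqrt_mul_self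
  have hTpd : T.PosDef := by
    have hTu : IsUnit T := by
      rw [Matrix.isUnit_iff_isUnit_det]
      have := hMpd.isUnit
      rw [Matrix.isUnit_iff_isUnit_det, ← hTT, Matrix.det_mul] at this
      exact isUnit_mul_self_iff.mp this
    refine posDef_of_posSemidef_isUnit ?_ hTu
    rw [← hTdef, msqrt_eq hMpd.posSemidef]; exact hMpd.posSemidef.posSemidef_sqrt
  have hgeom : geom A B = S * T * S := by rw [geom, hSdef, hMdef, hTdef]
  have hAinv : A⁻¹ = S⁻¹ * S⁻¹ := by rw [← hSS, Matrix.mul_inv_rev]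
  have key : geom A B * A⁻¹ * geom A B = B := by
    rw [hgeom, hAinv]
    calc S * T * S * (S⁻¹ * S⁻¹) * (S * T * S)
        = S * T * ((S * S⁻¹) * (S⁻¹ * S)) * T * S := by noncomm_ring
      _ = S * (T * T) * S := by rw [hSi, hSi']; noncomm_ring
      _ = S * (S⁻¹ * B * S⁻¹) * S := by rw [hTT, ← hMdef]
      _ = (S * S⁻¹) * B * (S⁻¹ * S) := by noncomm_ring
      _ = B := by rw [hSi, hSi', one_mul, mul_one]
  refine ⟨?_, key, ?_⟩
  · rw [hgeom]
    nth_rewrite 1 [← hSH]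
    exact posDef_conj hTpd hSu
  · intro X hX hXeq
    have hYpd : (S⁻¹ * X * S⁻¹).PosDef := by
      nth_rewrite 1 [← hSiH]
      exact posDef_conj hX hSiu
    have hYY : (S⁻¹ * X * S⁻¹) ^ 2 = M := by
      rw [pow_two, ← hMdef, ← hXeq, hAinv]
      noncomm_ring
    have hYT : S⁻¹ * X * S⁻¹ = T := by
      rw [← hTdef, msqrt_eq hMpd.posSemidef]
      exact hYpd.posSemidef.eq_sqrt_of_sq_eq hMpd.posSemidef hYY
    have hX' : X = S * (S⁻¹ * X * S⁻¹) * S := by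
      calc X = (S * S⁻¹) * X * (S⁻¹ * S) := by rw [hSi, hSi', one_mul, mul_one]
        _ = S * (S⁻¹ * X * S⁻¹) * S := by noncomm_ring
    rw [hX', hYT, hgeom]
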